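/- Let X be a positive random variable (X > 0 almost surely) with E[X] = 1, and let λ > 0. Then: (i) for every P ∈ (0, λ), 0 < P·ES_{P/λ}(X) ≤ λ, where P·ES_{P/λ}(X) = λ·∫₀^{P/λ} VaR_u(X) du; (ii) if in addition E^bau > λρ̂ > 0, then the demand function P ↦ VaR_{P/λ}(X)·(E^bau − P·ES_{P/λ}(X)·ρ̂) is strictly positive and non-increasing on (0, λ). -/

import Mathlib

open MeasureTheory Set
open scoped ENNReal NNReal

/-- Value-at-risk at level `ε`: `VaR_ε(X) = inf {y | ℙ[X ≤ y] ≥ 1 − ε}`. -/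
noncomputable def VaR {Ω : Type*} [MeasurableSpace Ω] (μ : Measure Ω)
    (X : Ω → ℝ) (ε : ℝ) : ℝ :=
  sInf {y : ℝ | 1 - ε ≤ (μ {ω | X ω ≤ y}).toReal}

/-- Expected shortfall at level `ε`: `ES_ε(X) = (1/ε)∫₀^ε VaR_u(X) du`. -/
noncomputable def ES {Ω : Type*} [MeasurableSpace Ω] (μ : Measure Ω)
    (X : Ω → ℝ) (ε : ℝ) : ℝ :=
  (1 / ε) * ∫ u in (0 : ℝ)..ε, VaR μ X u

section Aux
variable {Ω : Type*} [MeasurableSpace Ω] {μ : Measure Ω} [IsProbabilityMeasure μ] {X : Ω → ℝ}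

lemma cdf_mono : Monotone fun y : ℝ => (μ {ω | X ω ≤ y}).toReal := fun a b hab =>
  ENNReal.toReal_mono (measure_ne_top μ _) (measure_mono fun ω (h : X ω ≤ a) => h.trans hab)

lemma cdf_zero (hXpos : ∀ᵐ ω ∂μ, 0 < X ω) {y : ℝ} (hy : y ≤ 0) :
    (μ {ω | X ω ≤ y}).toReal = 0 := by
  have h0 : μ {ω | X ω ≤ y} = 0 :=
    measure_mono_null (fun ω (h : X ω ≤ y) => not_lt.2 (h.trans hy)) (ae_iff.mp hXpos)
  simp [h0]

lemma exists_cdf_lt (hXmeas : Measurable X) {t c : ℝ}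
    (h : (μ {ω | X ω ≤ t}).toReal < c) :
    ∃ δ > 0, (μ {ω | X ω ≤ t + δ}).toReal < c := by
  set s : ℕ → Set Ω := fun n => {ω | X ω ≤ t + 1 / (n + 1)} with hs
  have hanti : Antitone s := by
    intro m n hmn ω hω
    refine le_trans (show X ω ≤ t + 1 / ((n:ℝ) + 1) from hω) (add_le_add (le_refl t) ?_)
    have hc : ((m:ℝ)+1) ≤ (n:ℝ)+1 := by exact_mod_cast Nat.succ_le_succ hmn
    exact one_div_le_one_div_of_le (by positivity) hc
  have hinter : ⋂ n, s n = {ω | X ω ≤ t} := by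
    ext ω
    simp only [mem_iInter, mem_setOf_eq, hs]
    constructor
    · intro h'
      by_contra hlt
      push_neg at hlt
      obtain ⟨n, hn⟩ := exists_nat_one_div_lt (sub_pos.2 hlt)
      have := h' n
      push_cast at this hn
      linarith
    · intro h' n
      have : (0:ℝ) < 1 / (n + 1) := by positivity
      linarith
  have htend : Filter.Tendsto (μ ∘ s) Filter.atTop (nhds (μ {ω | X ω ≤ t})) := by
    rw [← hinter]
    exact tendsto_measure_iInter_atTop
      (fun n => (hXmeas measurableSet_Iic).nullMeasurableSet) hanti
      ⟨0, measure_ne_top μ _⟩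
  have hlt : μ {ω | X ω ≤ t} < ENNReal.ofReal c :=
    (ENNReal.lt_ofReal_iff_toReal_lt (measure_ne_top μ _)).2 h
  obtain ⟨n, hn⟩ := (htend.eventually_lt_const hlt).exists
  exact ⟨1 / (n + 1), by positivity, ENNReal.toReal_lt_of_lt_ofReal hn⟩

lemma exists_cdf_ge (hXmeas : Measurable X) {c : ℝ} (hc : c < 1) :
    ∃ y : ℝ, c ≤ (μ {ω | X ω ≤ y}).toReal := by
  set s : ℕ → Set Ω := fun n => {ω | X ω ≤ (n : ℝ)} with hs
  have hmono : Monotone s := fun m n hmn ω hω => show X ω ≤ (n:ℝ) from le_trans hω (Nat.cast_le.2 hmn)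
  have hunion : ⋃ n, s n = univ := by
    ext ω
    simp only [mem_iUnion, mem_setOf_eq, mem_univ, iff_true, hs]
    exact exists_nat_ge (X ω)
  have htend : Filter.Tendsto (μ ∘ s) Filter.atTop (nhds 1) := by
    have := tendsto_measure_iUnion_atTop (μ := μ) hmono
    rwa [hunion, measure_univ] at this
  have hlt : ENNReal.ofReal c < 1 := ENNReal.ofReal_lt_one.2 hc
  obtain ⟨n, hn⟩ := (htend.eventually_const_lt hlt).exists
  exact ⟨n, (ENNReal.ofReal_le_iff_le_toReal (measure_ne_top μ _)).1 hn.le⟩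

lemma nonempty_A (hXmeas : Measurable X) {u : ℝ} (hu : 0 < u) :
    {y : ℝ | 1 - u ≤ (μ {ω | X ω ≤ y}).toReal}.Nonempty :=
  exists_cdf_ge hXmeas (by linarith)

lemma bddBelow_A (hXpos : ∀ᵐ ω ∂μ, 0 < X ω) {u : ℝ} (hu : u < 1) :
    BddBelow {y : ℝ | 1 - u ≤ (μ {ω | X ω ≤ y}).toReal} := by
  refine ⟨0, fun y hy => le_of_not_gt fun hlt => ?_⟩
  rw [mem_setOf_eq, cdf_zero hXpos hlt.le] at hy
  linarith

lemma VaR_le (hXpos : ∀ᵐ ω ∂μ, 0 < X ω) {u t : ℝ} (hu : u < 1)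
    (ht : 1 - u ≤ (μ {ω | X ω ≤ t}).toReal) : VaR μ X u ≤ t :=
  csInf_le (bddBelow_A hXpos hu) ht

lemma lt_VaR (hXmeas : Measurable X) {u t : ℝ} (hu : 0 < u)
    (ht : (μ {ω | X ω ≤ t}).toReal < 1 - u) : t < VaR μ X u := by
  obtain ⟨δ, hδ, hδlt⟩ := exists_cdf_lt hXmeas ht
  have : t + δ ≤ VaR μ X u := by
    refine le_csInf (nonempty_A hXmeas hu) fun y hy => le_of_not_gt fun hlt => ?_
    have := (cdf_mono (μ := μ) (X := X) hlt.le).trans_lt hδlt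
    rw [mem_setOf_eq] at hy
    linarith
  linarith

lemma VaR_pos (hXpos : ∀ᵐ ω ∂μ, 0 < X ω) (hXmeas : Measurable X) {u : ℝ}
    (hu : u ∈ Ioo (0:ℝ) 1) : 0 < VaR μ X u :=
  lt_VaR hXmeas hu.1 (by rw [cdf_zero hXpos le_rfl]; linarith [hu.2])

lemma VaR_antitoneOn (hXpos : ∀ᵐ ω ∂μ, 0 < X ω) (hXmeas : Measurable X) :
    AntitoneOn (VaR μ X) (Ioo (0:ℝ) 1) := fun u hu v hv huv =>
  csInf_le_csInf (bddBelow_A hXpos hv.2) (nonempty_A hXmeas hu.1)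
    (fun y hy => by
      simp only [mem_setOf_eq] at hy ⊢
      linarith)

lemma Ioo_VaR (hXpos : ∀ᵐ ω ∂μ, 0 < X ω) (hXmeas : Measurable X) {u : ℝ}
    (hu : u ∈ Ioo (0:ℝ) 1) :
    {t : ℝ | 0 < t ∧ (μ {ω | X ω ≤ t}).toReal < 1 - u} = Ioo 0 (VaR μ X u) := by
  ext t
  simp only [mem_setOf_eq, mem_Ioo]
  refine ⟨fun ⟨h1, h2⟩ => ⟨h1, lt_VaR hXmeas hu.1 h2⟩, fun ⟨h1, h2⟩ => ⟨h1, ?_⟩⟩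
  by_contra h
  push_neg at h
  exact absurd (VaR_le hXpos hu.2 h) (not_le.2 h2)

end Aux
section Aux2
variable {Ω : Type*} [MeasurableSpace Ω] {μ : Measure Ω} [IsProbabilityMeasure μ] {X : Ω → ℝ}

lemma lintegral_VaR_eq_one (hXpos : ∀ᵐ ω ∂μ, 0 < X ω) (hXmeas : Measurable X)
    (hXint : Integrable X μ) (hEX : ∫ ω, X ω ∂μ = 1) :
    ∫⁻ u in Ioo (0:ℝ) 1, ENNReal.ofReal (VaR μ X u) = 1 := by
  have Fm : Measurable fun y : ℝ => (μ {ω | X ω ≤ y}).toReal :=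
    (cdf_mono (μ := μ) (X := X)).measurable
  set s : Set (ℝ × ℝ) := {p | (μ {ω | X ω ≤ p.2}).toReal < 1 - p.1} with hsdef
  have hsm : MeasurableSet s :=
    measurableSet_lt (Fm.comp measurable_snd) (measurable_const.sub measurable_fst)
  have step1 : ∫⁻ u in Ioo (0:ℝ) 1, ENNReal.ofReal (VaR μ X u)
      = ∫⁻ u in Ioo (0:ℝ) 1, (volume.restrict (Ioi (0:ℝ))) (Prod.mk u ⁻¹' s) := by
    refine setLIntegral_congr_fun measurableSet_Ioo
      (fun u hu => ?_)
    have h1 : Prod.mk u ⁻¹' s = {t : ℝ | (μ {ω | X ω ≤ t}).toReal < 1 - u} := rfl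
    have h2 : {t : ℝ | (μ {ω | X ω ≤ t}).toReal < 1 - u} ∩ Ioi 0
        = {t : ℝ | 0 < t ∧ (μ {ω | X ω ≤ t}).toReal < 1 - u} := by
      ext t; simp only [mem_inter_iff, mem_setOf_eq, mem_Ioi]; tauto
    rw [h1, Measure.restrict_apply' measurableSet_Ioi, h2, Ioo_VaR hXpos hXmeas hu,
      Real.volume_Ioo, sub_zero]
  have step4 : ∀ t : ℝ, (volume.restrict (Ioo (0:ℝ) 1)) ((fun u => (u, t)) ⁻¹' s)
      = μ {ω | t < X ω} := by
    intro t
    have h1 : (fun u => (u, t)) ⁻¹' s = Iio (1 - (μ {ω | X ω ≤ t}).toReal) := by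
      ext u; simp only [hsdef, mem_preimage, mem_setOf_eq, mem_Iio]; constructor <;>
        intro h <;> linarith
    have h2 : Iio (1 - (μ {ω | X ω ≤ t}).toReal) ∩ Ioo (0:ℝ) 1
        = Ioo 0 (1 - (μ {ω | X ω ≤ t}).toReal) := by
      have hF0 : 0 ≤ (μ {ω | X ω ≤ t}).toReal := ENNReal.toReal_nonneg
      ext u
      simp only [mem_inter_iff, mem_Iio, mem_Ioo]
      constructor
      · rintro ⟨h1', h2', _⟩; exact ⟨h2', h1'⟩
      · rintro ⟨h1', h2'⟩; exact ⟨h2', h1', by linarith⟩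
    have h3 : {ω | t < X ω} = {ω | X ω ≤ t}ᶜ := by
      ext ω; simp [not_le]
    rw [h1, Measure.restrict_apply' measurableSet_Ioo, h2, Real.volume_Ioo, sub_zero,
      h3, measure_compl (measurableSet_le hXmeas measurable_const) (measure_ne_top μ _), measure_univ,
      ← ENNReal.ofReal_one, ← ENNReal.ofReal_toReal (measure_ne_top μ {ω | X ω ≤ t}),
      ← ENNReal.ofReal_sub _ ENNReal.toReal_nonneg]
    simp
  calc ∫⁻ u in Ioo (0:ℝ) 1, ENNReal.ofReal (VaR μ X u)
      = ∫⁻ u in Ioo (0:ℝ) 1, (volume.restrict (Ioi (0:ℝ))) (Prod.mk u ⁻¹' s) := step1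
    _ = ((volume.restrict (Ioo (0:ℝ) 1)).prod (volume.restrict (Ioi (0:ℝ)))) s :=
        (Measure.prod_apply hsm).symm
    _ = ∫⁻ t in Ioi (0:ℝ), (volume.restrict (Ioo (0:ℝ) 1)) ((fun u => (u, t)) ⁻¹' s) :=
        Measure.prod_apply_symm hsm
    _ = ∫⁻ t in Ioi (0:ℝ), μ {ω | t < X ω} := by
        refine lintegral_congr fun t => step4 t
    _ = ∫⁻ ω, ENNReal.ofReal (X ω) ∂μ :=
        (lintegral_eq_lintegral_meas_lt μ (hXpos.mono fun ω h => h.le)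
          hXmeas.aemeasurable).symm
    _ = ENNReal.ofReal (∫ ω, X ω ∂μ) :=
        (ofReal_integral_eq_lintegral_ofReal hXint (hXpos.mono fun ω h => h.le)).symm
    _ = 1 := by rw [hEX, ENNReal.ofReal_one]

end Aux2
section Aux3
variable {Ω : Type*} [MeasurableSpace Ω] {μ : Measure Ω} [IsProbabilityMeasure μ] {X : Ω → ℝ}

lemma VaR_integrableOn (hXpos : ∀ᵐ ω ∂μ, 0 < X ω) (hXmeas : Measurable X)
    (hXint : Integrable X μ) (hEX : ∫ ω, X ω ∂μ = 1) {ε : ℝ} (hε1 : ε ≤ 1) :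
    IntegrableOn (VaR μ X) (Ioo (0:ℝ) ε) volume := by
  have hsub : Ioo (0:ℝ) ε ⊆ Ioo 0 1 := Ioo_subset_Ioo le_rfl hε1
  have hae : AEMeasurable (VaR μ X) (volume.restrict (Ioo (0:ℝ) ε)) :=
    aemeasurable_restrict_of_antitoneOn measurableSet_Ioo
      ((VaR_antitoneOn hXpos hXmeas).mono hsub)
  refine ⟨hae.aestronglyMeasurable, ?_⟩
  rw [hasFiniteIntegral_def]
  have hcong : ∫⁻ u in Ioo (0:ℝ) ε, ‖VaR μ X u‖ₑ
      = ∫⁻ u in Ioo (0:ℝ) ε, ENNReal.ofReal (VaR μ X u) :=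
    setLIntegral_congr_fun measurableSet_Ioo (fun u hu =>
      Real.enorm_eq_ofReal (VaR_pos hXpos hXmeas (hsub hu)).le)
  rw [hcong]
  calc ∫⁻ u in Ioo (0:ℝ) ε, ENNReal.ofReal (VaR μ X u)
      ≤ ∫⁻ u in Ioo (0:ℝ) 1, ENNReal.ofReal (VaR μ X u) := lintegral_mono_set hsub
    _ = 1 := lintegral_VaR_eq_one hXpos hXmeas hXint hEX
    _ < ⊤ := ENNReal.one_lt_top

lemma setIntegral_VaR_le_one (hXpos : ∀ᵐ ω ∂μ, 0 < X ω) (hXmeas : Measurable X)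
    (hXint : Integrable X μ) (hEX : ∫ ω, X ω ∂μ = 1) {ε : ℝ} (hε1 : ε ≤ 1) :
    ∫ u in Ioo (0:ℝ) ε, VaR μ X u ≤ 1 := by
  have hsub : Ioo (0:ℝ) ε ⊆ Ioo 0 1 := Ioo_subset_Ioo le_rfl hε1
  have hnn : 0 ≤ᵐ[volume.restrict (Ioo (0:ℝ) ε)] VaR μ X :=
    (ae_restrict_iff' measurableSet_Ioo).2 (Filter.Eventually.of_forall fun u hu =>
      (VaR_pos hXpos hXmeas (hsub hu)).le)
  rw [integral_eq_lintegral_of_nonneg_ae hnn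
    (VaR_integrableOn hXpos hXmeas hXint hEX hε1).aestronglyMeasurable]
  have hle : ∫⁻ u in Ioo (0:ℝ) ε, ENNReal.ofReal (VaR μ X u) ≤ 1 := by
    calc ∫⁻ u in Ioo (0:ℝ) ε, ENNReal.ofReal (VaR μ X u)
        ≤ ∫⁻ u in Ioo (0:ℝ) 1, ENNReal.ofReal (VaR μ X u) := lintegral_mono_set hsub
      _ = 1 := lintegral_VaR_eq_one hXpos hXmeas hXint hEX
  calc (∫⁻ u in Ioo (0:ℝ) ε, ENNReal.ofReal (VaR μ X u)).toReal
      ≤ (1 : ℝ≥0∞).toReal := ENNReal.toReal_mono ENNReal.one_ne_top hle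
    _ = 1 := ENNReal.toReal_one

lemma setIntegral_VaR_pos (hXpos : ∀ᵐ ω ∂μ, 0 < X ω) (hXmeas : Measurable X)
    (hXint : Integrable X μ) (hEX : ∫ ω, X ω ∂μ = 1) {ε : ℝ}
    (hε : ε ∈ Ioo (0:ℝ) 1) : 0 < ∫ u in Ioo (0:ℝ) ε, VaR μ X u := by
  have hconst : ∫ u in Ioo (0:ℝ) ε, VaR μ X ε = ε * VaR μ X ε := by
    rw [setIntegral_const, Real.volume_real_Ioo_of_le hε.1.le, sub_zero, smul_eq_mul]
  have hmono : ∫ u in Ioo (0:ℝ) ε, VaR μ X ε ≤ ∫ u in Ioo (0:ℝ) ε, VaR μ X u := by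
    refine setIntegral_mono_on (integrableOn_const (by
      rw [Real.volume_Ioo]; exact ENNReal.ofReal_ne_top))
      (VaR_integrableOn hXpos hXmeas hXint hEX hε.2.le) measurableSet_Ioo
      (fun u hu => ?_)
    exact VaR_antitoneOn hXpos hXmeas ⟨hu.1, hu.2.trans hε.2⟩ hε hu.2.le
  have := mul_pos hε.1 (VaR_pos hXpos hXmeas hε)
  linarith [hconst ▸ hmono]

lemma setIntegral_VaR_mono (hXpos : ∀ᵐ ω ∂μ, 0 < X ω) (hXmeas : Measurable X)
    (hXint : Integrable X μ) (hEX : ∫ ω, X ω ∂μ = 1) {ε₁ ε₂ : ℝ}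
    (h12 : ε₁ ≤ ε₂) (hε2 : ε₂ ≤ 1) :
    ∫ u in Ioo (0:ℝ) ε₁, VaR μ X u ≤ ∫ u in Ioo (0:ℝ) ε₂, VaR μ X u := by
  have hsub : Ioo (0:ℝ) ε₂ ⊆ Ioo 0 1 := Ioo_subset_Ioo le_rfl hε2
  refine setIntegral_mono_set (VaR_integrableOn hXpos hXmeas hXint hEX hε2)
    ((ae_restrict_iff' measurableSet_Ioo).2 (Filter.Eventually.of_forall fun u hu =>
      (VaR_pos hXpos hXmeas (hsub hu)).le))
    (HasSubset.Subset.eventuallyLE (Ioo_subset_Ioo le_rfl h12))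

lemma intervalIntegral_VaR_eq (ε : ℝ) (hε : 0 ≤ ε) :
    ∫ u in (0:ℝ)..ε, VaR μ X u = ∫ u in Ioo (0:ℝ) ε, VaR μ X u := by
  rw [intervalIntegral.integral_of_le hε, ← integral_Ioc_eq_integral_Ioo]

end Aux3

/-- For a positive random variable `X` with `E[X] = 1` and
`λ > 0`: (i) for every `P ∈ (0, λ)`, `0 < P·ES_{P/λ}(X) ≤ λ`, with
`P·ES_{P/λ}(X) = λ∫₀^{P/λ} VaR_u(X) du`; (ii) if `E^bau > λρ̂ > 0`, then the
certificate demand `P ↦ VaR_{P/λ}(X)(E^bau − P·ES_{P/λ}(X)ρ̂)` is strictly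
positive and non-increasing on `(0, λ)`. -/
theorem certificate_demand_positive_and_antitone
    {Ω : Type*} [MeasurableSpace Ω] (μ : Measure Ω) [IsProbabilityMeasure μ]
    (X : Ω → ℝ) (hXmeas : Measurable X)
    (hXpos : ∀ᵐ ω ∂μ, 0 < X ω)
    (hXint : Integrable X μ) (hEX : ∫ ω, X ω ∂μ = 1)
    (lam : ℝ) (hlam : 0 < lam) :
    (∀ P ∈ Set.Ioo (0 : ℝ) lam,
      0 < P * ES μ X (P / lam) ∧
      P * ES μ X (P / lam) ≤ lam ∧
      P * ES μ X (P / lam) = lam * ∫ u in (0 : ℝ)..(P / lam), VaR μ X u) ∧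
    (∀ Ebau ρhat : ℝ, 0 < ρhat → lam * ρhat < Ebau →
      (∀ P ∈ Set.Ioo (0 : ℝ) lam,
        0 < VaR μ X (P / lam) * (Ebau - P * ES μ X (P / lam) * ρhat)) ∧
      AntitoneOn (fun P => VaR μ X (P / lam) * (Ebau - P * ES μ X (P / lam) * ρhat))
        (Set.Ioo (0 : ℝ) lam)) := by
  have hmem : ∀ P ∈ Set.Ioo (0:ℝ) lam, P / lam ∈ Set.Ioo (0:ℝ) 1 := fun P hP =>
    ⟨div_pos hP.1 hlam, (div_lt_one hlam).2 hP.2⟩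
  have key : ∀ P ∈ Set.Ioo (0:ℝ) lam,
      P * ES μ X (P / lam) = lam * ∫ u in Ioo (0:ℝ) (P / lam), VaR μ X u := by
    intro P hP
    rw [ES, intervalIntegral_VaR_eq _ (div_nonneg hP.1.le hlam.le)]
    have hP0 : P ≠ 0 := ne_of_gt hP.1
    have hl0 : lam ≠ 0 := ne_of_gt hlam
    field_simp
  have Ipos : ∀ P ∈ Set.Ioo (0:ℝ) lam, 0 < ∫ u in Ioo (0:ℝ) (P / lam), VaR μ X u :=
    fun P hP => setIntegral_VaR_pos hXpos hXmeas hXint hEX (hmem P hP)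
  have Ile : ∀ P ∈ Set.Ioo (0:ℝ) lam, ∫ u in Ioo (0:ℝ) (P / lam), VaR μ X u ≤ 1 :=
    fun P hP => setIntegral_VaR_le_one hXpos hXmeas hXint hEX (hmem P hP).2.le
  refine ⟨fun P hP => ?_, fun Ebau ρhat hρ hbau => ?_⟩
  · refine ⟨?_, ?_, ?_⟩
    · rw [key P hP]
      exact mul_pos hlam (Ipos P hP)
    · rw [key P hP]
      calc lam * ∫ u in Ioo (0:ℝ) (P / lam), VaR μ X u ≤ lam * 1 :=
            mul_le_mul_of_nonneg_left (Ile P hP) hlam.le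
        _ = lam := mul_one lam
    · rw [key P hP, intervalIntegral_VaR_eq _ (div_nonneg hP.1.le hlam.le)]
  · have hfac : ∀ P ∈ Set.Ioo (0:ℝ) lam,
        0 < Ebau - P * ES μ X (P / lam) * ρhat := by
      intro P hP
      rw [key P hP]
      have h1 : lam * (∫ u in Ioo (0:ℝ) (P / lam), VaR μ X u) * ρhat ≤ lam * 1 * ρhat :=
        mul_le_mul_of_nonneg_right (mul_le_mul_of_nonneg_left (Ile P hP) hlam.le) hρ.le
      nlinarith
    refine ⟨fun P hP => mul_pos (VaR_pos hXpos hXmeas (hmem P hP)) (hfac P hP), ?_⟩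
    intro P hP Q hQ hPQ
    simp only
    have hdivle : P / lam ≤ Q / lam := by gcongr
    have hVaR : VaR μ X (Q / lam) ≤ VaR μ X (P / lam) :=
      VaR_antitoneOn hXpos hXmeas (hmem P hP) (hmem Q hQ) hdivle
    have hImono : ∫ u in Ioo (0:ℝ) (P / lam), VaR μ X u
        ≤ ∫ u in Ioo (0:ℝ) (Q / lam), VaR μ X u :=
      setIntegral_VaR_mono hXpos hXmeas hXint hEX hdivle (hmem Q hQ).2.le
    have hfacmono : Ebau - Q * ES μ X (Q / lam) * ρhat
        ≤ Ebau - P * ES μ X (P / lam) * ρhat := by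
      rw [key P hP, key Q hQ]
      have : lam * (∫ u in Ioo (0:ℝ) (P / lam), VaR μ X u) * ρhat
          ≤ lam * (∫ u in Ioo (0:ℝ) (Q / lam), VaR μ X u) * ρhat :=
        mul_le_mul_of_nonneg_right (mul_le_mul_of_nonneg_left hImono hlam.le) hρ.le
      linarith
    exact mul_le_mul hVaR hfacmono (hfac Q hQ).le
      (VaR_pos hXpos hXmeas (hmem P hP)).le
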